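/- Let r, s ≥ 1 and set r′ = r(r+1)/2 and s′ = s(s+1)/2. Index the rows of an r′×s′ matrix by the indices 1 ≤ i ≤ r together with the pairs (i,j) with 1 ≤ i < j ≤ r, and the columns by the indices 1 ≤ k ≤ s together with the pairs (k,l) with 1 ≤ k < l ≤ s. Define f : M(r×s, ℂ) → M(r′×s′, ℂ) by: f(Z)_{i,k} = z_{ik}², f(Z)_{(i,j),k} = √2 z_{ik} z_{jk}, f(Z)_{i,(k,l)} = √2 z_{ik} z_{il}, and f(Z)_{(i,j),(k,l)} = z_{ik} z_{jl} + z_{jk} z_{il}. Then f maps Ω_{r,s} into Ω_{r′,s′}, and the restriction f : Ω_{r,s} → Ω_{r′,s′} is a proper map, i.e., the preimage under f of every compact subset of Ω_{r′,s′} is compact. -/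

import Mathlib

set_option linter.unusedSectionVars false

open Matrix
open scoped ComplexOrder

section Aux

variable {m n p : Type*} [Fintype m] [Fintype n] [Fintype p]
  [LinearOrder m] [LinearOrder n] [LinearOrder p]

/-- Index type for strictly increasing pairs. -/
abbrev PIdx (α : Type*) [LT α] := {p : α × α // p.1 < p.2}

/-- Trichotomy equivalence. -/
def trichEquiv (m : Type*) [LinearOrder m] : m ⊕ (PIdx m ⊕ PIdx m) ≃ m × m where
  toFun := Sum.elim (fun i => (i, i)) (Sum.elim (fun p => p.1) (fun p => (p.1.2, p.1.1)))
  invFun q :=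
    if h : q.1 < q.2 then Sum.inr (Sum.inl ⟨q, h⟩)
    else if h' : q.2 < q.1 then Sum.inr (Sum.inr ⟨(q.2, q.1), h'⟩)
    else Sum.inl q.1
  left_inv := by
    rintro (i | (⟨⟨a, b⟩, h⟩ | ⟨⟨a, b⟩, h⟩))
    · simp [lt_irrefl]
    · simp [h]
    · simp [h, lt_asymm h]
  right_inv := by
    rintro ⟨a, b⟩
    dsimp only
    split_ifs with h h'
    · rfl
    · rfl
    · have : a = b := le_antisymm (not_lt.1 h') (not_lt.1 h)
      subst this; rfl

lemma sum_prod_split (g : m × m → ℂ) :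
    ∑ q : m × m, g q = ∑ i, g (i, i) +
      ∑ q : PIdx m, (g q.1 + g (q.1.2, q.1.1)) := by
  rw [← Equiv.sum_comp (trichEquiv m) g, Fintype.sum_sum_type, Fintype.sum_sum_type,
    ← Finset.sum_add_distrib]
  rfl

lemma key_sum (a b : m → ℂ) :
    (∑ j, a j) * (∑ j, b j) =
      (∑ j, a j * b j) + ∑ q : PIdx m, (a q.1.1 * b q.1.2 + a q.1.2 * b q.1.1) := by
  rw [Finset.sum_mul_sum, ← Finset.sum_product' Finset.univ Finset.univ (fun i j => a i * b j),
    Finset.univ_product_univ]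
  exact sum_prod_split (fun q => a q.1 * b q.2)

/-- The symmetric-square matrix map. -/
noncomputable def symSq (A : Matrix m n ℂ) : Matrix (m ⊕ PIdx m) (n ⊕ PIdx n) ℂ :=
  Matrix.of fun x y =>
    match x, y with
    | Sum.inl i, Sum.inl k => A i k ^ 2
    | Sum.inr p, Sum.inl k => (Real.sqrt 2 : ℂ) * (A p.1.1 k * A p.1.2 k)
    | Sum.inl i, Sum.inr q => (Real.sqrt 2 : ℂ) * (A i q.1.1 * A i q.1.2)
    | Sum.inr p, Sum.inr q => A p.1.1 q.1.1 * A p.1.2 q.1.2 + A p.1.2 q.1.1 * A p.1.1 q.1.2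

@[simp] lemma symSq_ll (A : Matrix m n ℂ) (i k) :
    symSq A (Sum.inl i) (Sum.inl k) = A i k ^ 2 := rfl
@[simp] lemma symSq_rl (A : Matrix m n ℂ) (p k) :
    symSq A (Sum.inr p) (Sum.inl k) = (Real.sqrt 2 : ℂ) * (A p.1.1 k * A p.1.2 k) := rfl
@[simp] lemma symSq_lr (A : Matrix m n ℂ) (i q) :
    symSq A (Sum.inl i) (Sum.inr q) = (Real.sqrt 2 : ℂ) * (A i q.1.1 * A i q.1.2) := rfl
@[simp] lemma symSq_rr (A : Matrix m n ℂ) (p q) :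
    symSq A (Sum.inr p) (Sum.inr q) =
      A p.1.1 q.1.1 * A p.1.2 q.1.2 + A p.1.2 q.1.1 * A p.1.1 q.1.2 := rfl

lemma sqrt2_mul_self : (Real.sqrt 2 : ℂ) * (Real.sqrt 2 : ℂ) = 2 := by
  rw [← Complex.ofReal_mul, Real.mul_self_sqrt (by norm_num : (0:ℝ) ≤ 2)]
  norm_num

lemma symSq_mul (A : Matrix m n ℂ) (B : Matrix n p ℂ) :
    symSq A * symSq B = symSq (A * B) := by
  have h2 := sqrt2_mul_self
  ext x y
  cases x with
  | inl i =>
    cases y with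
    | inl k =>
      simp only [mul_apply, symSq_ll, symSq_rl, symSq_lr, symSq_rr, Fintype.sum_sum_type]
      rw [sq, key_sum (fun j => A i j * B j k) (fun j => A i j * B j k)]
      congr 1
      · exact Finset.sum_congr rfl fun j _ => by ring
      · exact Finset.sum_congr rfl fun q _ => by
          linear_combination (A i q.1.1 * A i q.1.2 * B q.1.1 k * B q.1.2 k) * h2
    | inr q =>
      simp only [mul_apply, symSq_ll, symSq_rl, symSq_lr, symSq_rr, Fintype.sum_sum_type]
      rw [key_sum (fun j => A i j * B j q.1.1) (fun j => A i j * B j q.1.2), mul_add,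
        Finset.mul_sum, Finset.mul_sum]
      congr 1
      · exact Finset.sum_congr rfl fun j _ => by ring
      · exact Finset.sum_congr rfl fun t _ => by ring
  | inr pp =>
    cases y with
    | inl k =>
      simp only [mul_apply, symSq_ll, symSq_rl, symSq_lr, symSq_rr, Fintype.sum_sum_type]
      rw [key_sum (fun j => A pp.1.1 j * B j k) (fun j => A pp.1.2 j * B j k), mul_add,
        Finset.mul_sum, Finset.mul_sum]
      congr 1
      · exact Finset.sum_congr rfl fun j _ => by ring
      · exact Finset.sum_congr rfl fun t _ => by ring
    | inr q =>
      simp only [mul_apply, symSq_ll, symSq_rl, symSq_lr, symSq_rr, Fintype.sum_sum_type]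
      rw [key_sum (fun j => A pp.1.1 j * B j q.1.1) (fun j => A pp.1.2 j * B j q.1.2),
        key_sum (fun j => A pp.1.2 j * B j q.1.1) (fun j => A pp.1.1 j * B j q.1.2),
        add_add_add_comm, ← Finset.sum_add_distrib, ← Finset.sum_add_distrib]
      congr 1
      · exact Finset.sum_congr rfl fun j _ => by
          linear_combination (A pp.1.1 j * A pp.1.2 j * B j q.1.1 * B j q.1.2) * h2
      · exact Finset.sum_congr rfl fun t _ => by ring

lemma symSq_conjTranspose (A : Matrix m n ℂ) : symSq Aᴴ = (symSq A)ᴴ := by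
  ext x y
  cases x <;> cases y <;>
    simp [conjTranspose_apply, _root_.map_mul, map_add, map_pow, Complex.conj_ofReal] <;> ring

variable [DecidableEq m]

lemma symSq_diagonal (d : m → ℂ) :
    symSq (diagonal d) =
      diagonal (Sum.elim (fun i => d i ^ 2) (fun q : PIdx m => d q.1.1 * d q.1.2)) := by
  ext x y
  cases x with
  | inl i =>
    cases y with
    | inl k =>
      simp only [symSq_ll, diagonal_apply]
      by_cases h : i = k
      · subst h; simp
      · rw [if_neg h, if_neg (by simp [h])]
        ring
    | inr q =>
      simp only [symSq_lr, diagonal_apply]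
      rw [if_neg (by simp : ¬((Sum.inl i : m ⊕ PIdx m) = Sum.inr q))]
      rcases eq_or_ne i q.1.1 with h | h
      · have h2 : ¬ i = q.1.2 := fun h2 => absurd (h.symm.trans h2) (ne_of_lt q.2)
        rw [if_neg h2, mul_zero, mul_zero]
      · rw [if_neg h, zero_mul, mul_zero]
  | inr pp =>
    cases y with
    | inl k =>
      simp only [symSq_rl, diagonal_apply]
      rw [if_neg (by simp : ¬((Sum.inr pp : m ⊕ PIdx m) = Sum.inl k))]
      rcases eq_or_ne pp.1.1 k with h | h
      · have h2 : ¬ pp.1.2 = k := fun h2 => absurd (h2.trans h.symm) (ne_of_gt pp.2)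
        rw [if_neg h2, mul_zero, mul_zero]
      · rw [if_neg h, zero_mul, mul_zero]
    | inr q =>
      rcases pp with ⟨⟨a, b⟩, hab⟩
      rcases q with ⟨⟨c, e⟩, hce⟩
      simp only [symSq_rr, diagonal_apply]
      have hy : ¬(b = c ∧ a = e) := by
        rintro ⟨rfl, rfl⟩
        exact absurd hce (lt_asymm hab)
      have key2 : (if b = c then d b else 0) * (if a = e then d a else 0) = 0 := by
        rcases eq_or_ne b c with rfl | h
        · rw [if_neg (fun h2 => hy ⟨rfl, h2⟩), mul_zero]
        · rw [if_neg h, zero_mul]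
      rw [key2, add_zero]
      by_cases h1 : a = c
      · by_cases h2 : b = e
        · subst h1; subst h2; simp
        · rw [if_neg h2, mul_zero,
            if_neg (by simp [Subtype.ext_iff, Prod.ext_iff, h2] :
              ¬((Sum.inr ⟨(a,b),hab⟩ : m ⊕ PIdx m) = Sum.inr ⟨(c,e),hce⟩))]
      · rw [if_neg h1, zero_mul,
          if_neg (by simp [Subtype.ext_iff, Prod.ext_iff, h1] :
            ¬((Sum.inr ⟨(a,b),hab⟩ : m ⊕ PIdx m) = Sum.inr ⟨(c,e),hce⟩))]

lemma symSq_one : symSq (1 : Matrix m m ℂ) = 1 := by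
  rw [← diagonal_one, symSq_diagonal, ← diagonal_one]
  congr 1
  funext x
  cases x <;> simp

end Aux

section PosDefStuff

variable {m : Type*} [Fintype m] [DecidableEq m]

lemma posDef_conj_of_isUnit {M B : Matrix m m ℂ} (hM : M.PosDef) (hB : IsUnit B) :
    (B * M * Bᴴ).PosDef := by
  refine Matrix.PosDef.of_dotProduct_mulVec_pos ?_ fun x hx => ?_
  · show (B * M * Bᴴ)ᴴ = B * M * Bᴴ
    rw [conjTranspose_mul, conjTranspose_mul, conjTranspose_conjTranspose, hM.1.eq, mul_assoc]
  · have hBH : IsUnit Bᴴ := by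
      rcases isUnit_iff_exists.1 hB with ⟨C, h1, h2⟩
      exact isUnit_iff_exists.2 ⟨Cᴴ, by rw [← conjTranspose_mul, h2, conjTranspose_one],
        by rw [← conjTranspose_mul, h1, conjTranspose_one]⟩
    have hy : Bᴴ *ᵥ x ≠ 0 := by
      intro h
      apply hx
      have hinj := Matrix.mulVec_injective_iff_isUnit.2 hBH
      exact hinj (h.trans (Matrix.mulVec_zero _).symm)
    have := hM.dotProduct_mulVec_pos hy
    calc (0 : ℂ) < star (Bᴴ *ᵥ x) ⬝ᵥ (M *ᵥ (Bᴴ *ᵥ x)) := this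
    _ = star x ⬝ᵥ ((B * M * Bᴴ) *ᵥ x) := by
        rw [Matrix.star_mulVec, conjTranspose_conjTranspose, ← Matrix.dotProduct_mulVec,
          Matrix.mulVec_mulVec, Matrix.mulVec_mulVec]

lemma posDef_conj_unitary_iff {U M : Matrix m m ℂ} (h1 : U * Uᴴ = 1) (h2 : Uᴴ * U = 1) :
    (U * M * Uᴴ).PosDef ↔ M.PosDef := by
  have hU : IsUnit U := isUnit_iff_exists.2 ⟨Uᴴ, h1, h2⟩
  have hUH : IsUnit Uᴴ := isUnit_iff_exists.2 ⟨U, h2, h1⟩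
  constructor
  · intro h
    have := posDef_conj_of_isUnit h hUH
    rw [conjTranspose_conjTranspose] at this
    have e : Uᴴ * (U * M * Uᴴ) * U = M := by
      rw [← mul_assoc, ← mul_assoc, h2, one_mul, mul_assoc, h2, mul_one]
    rwa [e] at this
  · intro h
    exact posDef_conj_of_isUnit h hU

end PosDefStuff

section Main

variable {m : Type*} [Fintype m] [LinearOrder m] [DecidableEq m]

/-- The central spectral lemma. -/
lemma posDef_one_sub_symSq_iff (A : Matrix m m ℂ) (hA : A.PosSemidef) :
    (1 - symSq A).PosDef ↔ (1 - A).PosDef := by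
  have hH : A.IsHermitian := hA.1
  set U : Matrix m m ℂ := (hH.eigenvectorUnitary : Matrix m m ℂ) with hUdef
  obtain ⟨h2, h1⟩ := Unitary.mem_iff.1 hH.eigenvectorUnitary.2
  rw [Matrix.star_eq_conjTranspose] at h1 h2
  set lam : m → ℝ := hH.eigenvalues with hlam
  have hspec : A = U * diagonal (fun i => (lam i : ℂ)) * Uᴴ := by
    have := hH.spectral_theorem
    rw [Unitary.conjStarAlgAut_apply, Matrix.star_eq_conjTranspose] at this
    exact this
  set D : Matrix m m ℂ := diagonal (fun i => (lam i : ℂ)) with hD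
  have hnn : ∀ i, 0 ≤ lam i := fun i => hA.eigenvalues_nonneg i
  -- symSq of unitary facts
  have hV1 : symSq U * (symSq U)ᴴ = 1 := by
    rw [← symSq_conjTranspose, symSq_mul, h1, symSq_one]
  have hV2 : (symSq U)ᴴ * symSq U = 1 := by
    rw [← symSq_conjTranspose, symSq_mul, h2, symSq_one]
  -- decompositions
  have hsd : symSq A = symSq U * symSq D * (symSq U)ᴴ := by
    rw [symSq_mul, ← symSq_conjTranspose, symSq_mul, ← hspec]
  have e1 : (1 : Matrix m m ℂ) - A = U * (1 - D) * Uᴴ := by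
    rw [Matrix.mul_sub, Matrix.sub_mul, mul_one, h1, hspec]
  have e2 : (1 : Matrix (m ⊕ PIdx m) (m ⊕ PIdx m) ℂ) - symSq A
      = symSq U * (1 - symSq D) * (symSq U)ᴴ := by
    rw [Matrix.mul_sub, Matrix.sub_mul, mul_one, hV1, hsd]
  rw [e1, e2, posDef_conj_unitary_iff h1 h2, posDef_conj_unitary_iff hV1 hV2]
  -- both sides are now about diagonal matrices
  have hDd : (1 : Matrix m m ℂ) - D = diagonal (fun i => ((1 - lam i : ℝ) : ℂ)) := by
    rw [hD, ← diagonal_one, diagonal_sub]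
    refine congrArg diagonal (funext fun i => ?_)
    push_cast
    ring
  have hSDd : (1 : Matrix (m ⊕ PIdx m) (m ⊕ PIdx m) ℂ) - symSq D
      = diagonal (Sum.elim (fun i => ((1 - lam i ^ 2 : ℝ) : ℂ))
          (fun q : PIdx m => ((1 - lam q.1.1 * lam q.1.2 : ℝ) : ℂ))) := by
    rw [hD, symSq_diagonal, ← diagonal_one, diagonal_sub]
    refine congrArg diagonal (funext fun x => ?_)
    cases x <;> simp <;> push_cast <;> ring
  rw [hDd, hSDd, posDef_diagonal_iff, posDef_diagonal_iff]
  constructor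
  · intro h i
    have := h (Sum.inl i)
    rw [Sum.elim_inl, Complex.zero_lt_real] at this
    rw [Complex.zero_lt_real]
    nlinarith [hnn i]
  · intro h x
    cases x with
    | inl i =>
      have := h i
      rw [Complex.zero_lt_real] at this
      rw [Sum.elim_inl, Complex.zero_lt_real]
      nlinarith [hnn i]
    | inr q =>
      have hq1 := h q.1.1
      have hq2 := h q.1.2
      rw [Complex.zero_lt_real] at hq1 hq2
      rw [Sum.elim_inr, Complex.zero_lt_real]
      nlinarith [hnn q.1.1, hnn q.1.2]

end Main

section Bounds

lemma entries_le_one {m n : Type*} [Fintype m] [Fintype n] [DecidableEq m]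
    {Z : Matrix m n ℂ} (h : (1 - Z * Zᴴ).PosDef) (i : m) (k : n) : ‖Z i k‖ ≤ 1 := by
  have hx : (Pi.single i 1 : m → ℂ) ≠ 0 := by
    intro h0
    have := congrFun h0 i
    rw [Pi.single_eq_same] at this
    exact one_ne_zero this
  have hpos := h.dotProduct_mulVec_pos hx
  have hstar : star (Pi.single i (1 : ℂ) : m → ℂ) = Pi.single i 1 := by
    funext j
    rcases eq_or_ne j i with rfl | hj
    · simp
    · simp [Pi.single_apply, hj]
  rw [hstar, Matrix.mulVec_single] at hpos
  simp only [MulOpposite.op_one, one_smul] at hpos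
  change 0 < Pi.single i (1:ℂ) ⬝ᵥ (fun j => (1 - Z * Zᴴ : Matrix m m ℂ) j i) at hpos
  have hdot : (Pi.single i (1:ℂ)) ⬝ᵥ (fun j => (1 - Z * Zᴴ : Matrix m m ℂ) j i)
      = (1 - Z * Zᴴ : Matrix m m ℂ) i i := by
    rw [single_dotProduct, one_mul]
  rw [hdot] at hpos
  rw [Matrix.sub_apply, Matrix.one_apply_eq, Matrix.mul_apply] at hpos
  simp only [Matrix.conjTranspose_apply, Complex.star_def, Complex.mul_conj] at hpos
  rw [← Complex.ofReal_sum, show ((1:ℂ) = ((1:ℝ):ℂ)) from by norm_num,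
    ← Complex.ofReal_sub, Complex.zero_lt_real] at hpos
  have h2 : Complex.normSq (Z i k) < 1 :=
    lt_of_le_of_lt (Finset.single_le_sum (fun j _ => Complex.normSq_nonneg (Z i j))
      (Finset.mem_univ k)) (by linarith)
  rw [Complex.normSq_eq_norm_sq] at h2
  nlinarith [norm_nonneg (Z i k)]

lemma isCompact_entries (m n : Type*) [Fintype m] [Fintype n] :
    IsCompact {Z : Matrix m n ℂ | ∀ i k, ‖Z i k‖ ≤ 1} := by
  have he : {Z : Matrix m n ℂ | ∀ i k, ‖Z i k‖ ≤ 1} =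
      Set.univ.pi fun _ : m => Set.univ.pi fun _ : n => Metric.closedBall (0:ℂ) 1 := by
    ext Z
    exact ⟨fun h i _ k _ => by
        rw [Metric.mem_closedBall, dist_zero_right]; exact h i k,
      fun h i k => by
        have := h i (Set.mem_univ i) k (Set.mem_univ k)
        rwa [Metric.mem_closedBall, dist_zero_right] at this⟩
  rw [he]
  exact isCompact_univ_pi fun _ => isCompact_univ_pi fun _ => isCompact_closedBall _ _

/-- The equivalence with weakly increasing pairs, for cardinality. -/
def leEquiv (m : Type*) [LinearOrder m] :
    m ⊕ PIdx m ≃ {p : m × m // p.1 ≤ p.2} where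
  toFun := Sum.elim (fun i => ⟨(i, i), le_refl i⟩) (fun p => ⟨p.1, le_of_lt p.2⟩)
  invFun q := if h : q.1.1 < q.1.2 then Sum.inr ⟨q.1, h⟩ else Sum.inl q.1.1
  left_inv := by
    rintro (i | ⟨⟨a, b⟩, h⟩)
    · simp [lt_irrefl]
    · simp [h]
  right_inv := by
    rintro ⟨⟨a, b⟩, h⟩
    dsimp only
    split_ifs with h'
    · rfl
    · have : a = b := le_antisymm h (not_lt.1 h')
      subst this; rfl

lemma card_sum_pidx (m : Type*) [Fintype m] [LinearOrder m] :
    Fintype.card (m ⊕ PIdx m) = Fintype.card m * (Fintype.card m + 1) / 2 := by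
  have := Fintype.card_congr ((leEquiv m).trans Sym2.sortEquiv.symm)
  rw [this, Sym2.card, Nat.choose_two_right]
  simp [Nat.mul_comm]

end Bounds

/-- The type I bounded symmetric domain `Ω` for matrices indexed by arbitrary finite
types (for `m = Fin r`, `n = Fin s` this is the usual `Ω_{r,s}`). -/
def OmegaI (m n : Type*) [Fintype m] [DecidableEq m] [Fintype n] :
    Set (Matrix m n ℂ) :=
  {Z | (1 - Z * Zᴴ).PosDef}

/-- Index rows by `Fin r ⊕ {(i,j) | i < j}` (a type of cardinality
`r′ = r(r+1)/2`) and columns by `Fin s ⊕ {(k,l) | k < l}` (cardinality `s′ = s(s+1)/2`).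
The map `f` with `f(Z)_{i,k} = z_{ik}²`, `f(Z)_{(i,j),k} = √2 z_{ik}z_{jk}`,
`f(Z)_{i,(k,l)} = √2 z_{ik}z_{il}`, `f(Z)_{(i,j),(k,l)} = z_{ik}z_{jl} + z_{jk}z_{il}`
maps `Ω_{r,s}` into `Ω_{r′,s′}` and is proper: preimages of compact subsets of `Ω_{r′,s′}`
are compact. -/
theorem statement19 (r s : ℕ) (hr : 1 ≤ r) (hs : 1 ≤ s)
    (f : Matrix (Fin r) (Fin s) ℂ →
      Matrix (Fin r ⊕ {p : Fin r × Fin r // p.1 < p.2})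
             (Fin s ⊕ {q : Fin s × Fin s // q.1 < q.2}) ℂ)
    (hf1 : ∀ Z (i : Fin r) (k : Fin s), f Z (Sum.inl i) (Sum.inl k) = Z i k ^ 2)
    (hf2 : ∀ Z (p : {p : Fin r × Fin r // p.1 < p.2}) (k : Fin s),
      f Z (Sum.inr p) (Sum.inl k) = (Real.sqrt 2 : ℂ) * (Z p.1.1 k * Z p.1.2 k))
    (hf3 : ∀ Z (i : Fin r) (q : {q : Fin s × Fin s // q.1 < q.2}),
      f Z (Sum.inl i) (Sum.inr q) = (Real.sqrt 2 : ℂ) * (Z i q.1.1 * Z i q.1.2))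
    (hf4 : ∀ Z (p : {p : Fin r × Fin r // p.1 < p.2}) (q : {q : Fin s × Fin s // q.1 < q.2}),
      f Z (Sum.inr p) (Sum.inr q)
        = Z p.1.1 q.1.1 * Z p.1.2 q.1.2 + Z p.1.2 q.1.1 * Z p.1.1 q.1.2) :
    Fintype.card (Fin r ⊕ {p : Fin r × Fin r // p.1 < p.2}) = r * (r + 1) / 2 ∧
    Fintype.card (Fin s ⊕ {q : Fin s × Fin s // q.1 < q.2}) = s * (s + 1) / 2 ∧
    (∀ Z ∈ OmegaI (Fin r) (Fin s),
      f Z ∈ OmegaI (Fin r ⊕ {p : Fin r × Fin r // p.1 < p.2})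
                   (Fin s ⊕ {q : Fin s × Fin s // q.1 < q.2})) ∧
    ∀ K : Set (Matrix (Fin r ⊕ {p : Fin r × Fin r // p.1 < p.2})
                      (Fin s ⊕ {q : Fin s × Fin s // q.1 < q.2}) ℂ),
      K ⊆ OmegaI (Fin r ⊕ {p : Fin r × Fin r // p.1 < p.2})
                 (Fin s ⊕ {q : Fin s × Fin s // q.1 < q.2}) →
      IsCompact K → IsCompact {Z | Z ∈ OmegaI (Fin r) (Fin s) ∧ f Z ∈ K} := by
  have hfs : f = fun Z => symSq Z := by
    funext Z
    ext x y
    cases x with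
    | inl i => cases y with
      | inl k => rw [hf1, symSq_ll]
      | inr q => rw [hf3, symSq_lr]
    | inr p => cases y with
      | inl k => rw [hf2, symSq_rl]
      | inr q => rw [hf4, symSq_rr]
  have hprod : ∀ Z : Matrix (Fin r) (Fin s) ℂ,
      symSq Z * (symSq Z)ᴴ = symSq (Z * Zᴴ) := fun Z => by
    rw [← symSq_conjTranspose, symSq_mul]
  have hrev : ∀ Z : Matrix (Fin r) (Fin s) ℂ,
      f Z ∈ OmegaI (Fin r ⊕ {p : Fin r × Fin r // p.1 < p.2})
        (Fin s ⊕ {q : Fin s × Fin s // q.1 < q.2}) → Z ∈ OmegaI (Fin r) (Fin s) := by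
    intro Z hfZ
    have h1 : (1 - f Z * (f Z)ᴴ).PosDef := hfZ
    rw [hfs] at h1
    simp only at h1
    rw [hprod Z] at h1
    exact (posDef_one_sub_symSq_iff _ (Matrix.posSemidef_self_mul_conjTranspose Z)).mp h1
  refine ⟨?_, ?_, ?_, ?_⟩
  · simpa using card_sum_pidx (Fin r)
  · simpa using card_sum_pidx (Fin s)
  · intro Z hZ
    have hO : (1 - Z * Zᴴ).PosDef := hZ
    show (1 - f Z * (f Z)ᴴ).PosDef
    rw [hfs]
    simp only
    rw [hprod Z]
    exact (posDef_one_sub_symSq_iff _ (Matrix.posSemidef_self_mul_conjTranspose Z)).mpr hO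
  · intro K hK hKc
    have hset : {Z | Z ∈ OmegaI (Fin r) (Fin s) ∧ f Z ∈ K} = f ⁻¹' K :=
      Set.ext fun Z => ⟨fun h => h.2, fun h => ⟨hrev Z (hK h), h⟩⟩
    rw [hset]
    have hcont : Continuous f := by
      rw [hfs]
      apply continuous_matrix
      intro x y
      cases x with
      | inl i => cases y with
        | inl k =>
          simp only [symSq_ll]
          fun_prop
        | inr q =>
          simp only [symSq_lr]
          fun_prop
      | inr p => cases y with
        | inl k =>
          simp only [symSq_rl]
          fun_prop
        | inr q =>
          simp only [symSq_rr]
          fun_prop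
    refine IsCompact.of_isClosed_subset (isCompact_entries (Fin r) (Fin s))
      (hKc.isClosed.preimage hcont) ?_
    intro Z hZ
    exact fun i k => entries_le_one (hrev Z (hK hZ)) i k
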